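/- Let $G$ be a compact group, $K$ an algebraically closed topological field, and $\rho_1, \rho_2 \colon G \to \mathrm{GL}_2(K)$ semisimple continuous representations such that both are reducible (direct sums of two characters). If $\mathrm{ad}^0\rho_1 \cong \mathrm{ad}^0\rho_2$, then there exists a character $\eta \colon G \to K^\times$ with $\rho_1 \cong \eta \otimes \rho_2$. -/

import Mathlib

/-- An isomorphism `ad⁰ρ₁ ≅ ad⁰ρ₂` between the adjoint representations (conjugation on
trace-zero `2×2` matrices) of two matrix representations: a linear map of the matrix
space restricting to a linear bijection of the trace-zero matrices and intertwining the
two conjugation actions. -/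
def Ad0Iso {G K : Type*} [Group G] [Field K]
    (ρ₁ ρ₂ : G → Matrix (Fin 2) (Fin 2) K) : Prop :=
  ∃ L : Matrix (Fin 2) (Fin 2) K →ₗ[K] Matrix (Fin 2) (Fin 2) K,
    (∀ X : Matrix (Fin 2) (Fin 2) K, X.trace = 0 → (L X).trace = 0) ∧
    (∀ X : Matrix (Fin 2) (Fin 2) K, X.trace = 0 → L X = 0 → X = 0) ∧
    (∀ Y : Matrix (Fin 2) (Fin 2) K, Y.trace = 0 → ∃ X, X.trace = 0 ∧ L X = Y) ∧
    (∀ (g : G) (X : Matrix (Fin 2) (Fin 2) K), X.trace = 0 →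
      L (ρ₂ g * X * (ρ₂ g)⁻¹) = ρ₁ g * L X * (ρ₁ g)⁻¹)


section helpers
variable {K : Type*} [Field K]

lemma diag_inv (a b : Kˣ) :
    (Matrix.diagonal ![(a : K), (b : K)])⁻¹
      = Matrix.diagonal ![((a⁻¹ : Kˣ) : K), ((b⁻¹ : Kˣ) : K)] := by
  apply Matrix.inv_eq_right_inv
  rw [Matrix.diagonal_mul_diagonal]
  have : (fun i => (![(a : K), (b : K)] i) * (![((a⁻¹ : Kˣ) : K), ((b⁻¹ : Kˣ) : K)] i)) = fun _ => (1 : K) := by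
    funext i; fin_cases i <;> simp
  rw [this, Matrix.diagonal_one]

lemma conj_diag_apply (a b : Kˣ) (X : Matrix (Fin 2) (Fin 2) K) (i j : Fin 2) :
    (Matrix.diagonal ![(a : K), (b : K)] * X * (Matrix.diagonal ![(a : K), (b : K)])⁻¹) i j
      = ![(a : K), (b : K)] i * X i j * ![((a⁻¹ : Kˣ) : K), ((b⁻¹ : Kˣ) : K)] j := by
  rw [diag_inv, Matrix.mul_diagonal, Matrix.diagonal_mul]

end helpers

theorem stmt_12 {G K : Type*} [Group G] [TopologicalSpace G] [IsTopologicalGroup G]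
    [CompactSpace G] [Field K] [IsAlgClosed K] [TopologicalSpace K] [IsTopologicalRing K]
    (l₁ m₁ l₂ m₂ : G →* Kˣ)
    (hl₁ : Continuous fun g => (l₁ g : K)) (hm₁ : Continuous fun g => (m₁ g : K))
    (hl₂ : Continuous fun g => (l₂ g : K)) (hm₂ : Continuous fun g => (m₂ g : K))
    (hiso : Ad0Iso (fun g => Matrix.diagonal ![(l₁ g : K), (m₁ g : K)])
      (fun g => Matrix.diagonal ![(l₂ g : K), (m₂ g : K)])) :
    ∃ η : G →* Kˣ, ∃ P : Matrix (Fin 2) (Fin 2) K, IsUnit P.det ∧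
      ∀ g : G, (η g : K) • Matrix.diagonal ![(l₂ g : K), (m₂ g : K)] =
        P * Matrix.diagonal ![(l₁ g : K), (m₁ g : K)] * P⁻¹ := by
  obtain ⟨L, htr, hinj, hsurj, hcomm⟩ := hiso
  set E : Matrix (Fin 2) (Fin 2) K := Matrix.of ![![0, 1], ![0, 0]] with hEdef
  have hEtr : E.trace = 0 := by
    simp [Matrix.trace, Fin.sum_univ_two, hEdef]
  have hEne : E ≠ 0 := by
    intro h
    have := congrFun (congrFun h 0) 1
    simp [hEdef] at this
  -- conjugation of E by ρ₂ g
  have hconjE : ∀ g : G,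
      Matrix.diagonal ![(l₂ g : K), (m₂ g : K)] * E *
        (Matrix.diagonal ![(l₂ g : K), (m₂ g : K)])⁻¹
      = ((l₂ g : K) * (((m₂ g)⁻¹ : Kˣ) : K)) • E := by
    intro g
    ext i j
    rw [conj_diag_apply]
    fin_cases i <;> fin_cases j <;> simp [hEdef] <;> ring
  set Y := L E with hYdef
  have hYtr : Y.trace = 0 := htr E hEtr
  have hY : ∀ g : G,
      Matrix.diagonal ![(l₁ g : K), (m₁ g : K)] * Y *
        (Matrix.diagonal ![(l₁ g : K), (m₁ g : K)])⁻¹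
      = ((l₂ g : K) * (((m₂ g)⁻¹ : Kˣ) : K)) • Y := by
    intro g
    have := hcomm g E hEtr
    rw [hconjE g, map_smul] at this
    rw [← this]
  have hYentry : ∀ (g : G) (i j : Fin 2),
      ![(l₁ g : K), (m₁ g : K)] i * Y i j * ![(((l₁ g)⁻¹ : Kˣ) : K), (((m₁ g)⁻¹ : Kˣ) : K)] j
      = ((l₂ g : K) * (((m₂ g)⁻¹ : Kˣ) : K)) * Y i j := by
    intro g i j
    have := congrFun (congrFun (hY g) i) j
    rw [conj_diag_apply] at this
    simpa using this
  -- key dichotomy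
  have key : (∀ g : G, (l₁ g : K) * m₂ g = m₁ g * l₂ g) ∨
      (∀ g : G, (m₁ g : K) * m₂ g = l₁ g * l₂ g) := by
    by_cases h01 : Y 0 1 ≠ 0
    · left
      intro g
      have nm1 : (m₁ g : K) ≠ 0 := Units.ne_zero _
      have nm2 : (m₂ g : K) ≠ 0 := Units.ne_zero _
      have h := hYentry g 0 1
      simp only [Matrix.cons_val_zero, Matrix.cons_val_one, Matrix.head_cons,
        Units.val_inv_eq_inv_val] at h
      have hy : (l₁ g : K) * ((m₁ g : K))⁻¹ * Y 0 1
          = (l₂ g : K) * ((m₂ g : K))⁻¹ * Y 0 1 := by linear_combination h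
      have hr := mul_right_cancel₀ h01 hy
      field_simp at hr
      linear_combination hr
    by_cases h10 : Y 1 0 ≠ 0
    · right
      intro g
      have nl1 : (l₁ g : K) ≠ 0 := Units.ne_zero _
      have nm2 : (m₂ g : K) ≠ 0 := Units.ne_zero _
      have h := hYentry g 1 0
      simp only [Matrix.cons_val_zero, Matrix.cons_val_one, Matrix.head_cons,
        Units.val_inv_eq_inv_val] at h
      have hy : (m₁ g : K) * ((l₁ g : K))⁻¹ * Y 1 0
          = (l₂ g : K) * ((m₂ g : K))⁻¹ * Y 1 0 := by linear_combination h
      have hr := mul_right_cancel₀ h10 hy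
      field_simp at hr
      linear_combination hr
    -- now Y 0 0 ≠ 0 or Y 1 1 ≠ 0 (else Y = 0, contradiction)
    have h00 : Y 0 0 ≠ 0 ∨ Y 1 1 ≠ 0 := by
      by_contra hc
      push_neg at hc
      push_neg at h01 h10
      have : Y = 0 := by
        ext i j
        fin_cases i <;> fin_cases j <;>
          simp [hc.1, hc.2, h01, h10]
      exact hEne (hinj E hEtr (hYdef ▸ this))
    have hc1 : ∀ g : G, (l₂ g : K) = m₂ g := by
      intro g
      have nl1 : (l₁ g : K) ≠ 0 := Units.ne_zero _
      have nm1 : (m₁ g : K) ≠ 0 := Units.ne_zero _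
      have nm2 : (m₂ g : K) ≠ 0 := Units.ne_zero _
      rcases h00 with h | h
      · have he := hYentry g 0 0
        simp only [Matrix.cons_val_zero, Units.val_inv_eq_inv_val] at he
        have hy : (1 : K) * Y 0 0 = (l₂ g : K) * ((m₂ g : K))⁻¹ * Y 0 0 := by
          rw [← he]; field_simp
        have hr := mul_right_cancel₀ h hy
        field_simp at hr
        exact hr.symm
      · have he := hYentry g 1 1
        simp only [Matrix.cons_val_one, Matrix.head_cons, Matrix.cons_val_zero, Units.val_inv_eq_inv_val] at he
        have hy : (1 : K) * Y 1 1 = (l₂ g : K) * ((m₂ g : K))⁻¹ * Y 1 1 := by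
          rw [← he]; field_simp
        have hr := mul_right_cancel₀ h hy
        field_simp at hr
        exact hr.symm
    -- surjectivity: get X with L X = E, show l₁ = m₁
    left
    intro g
    obtain ⟨X, hXtr, hXE⟩ := hsurj E hEtr
    have nl2 : (l₂ g : K) ≠ 0 := Units.ne_zero _
    have nm2 : (m₂ g : K) ≠ 0 := Units.ne_zero _
    have nm1 : (m₁ g : K) ≠ 0 := Units.ne_zero _
    have hfix : Matrix.diagonal ![(l₂ g : K), (m₂ g : K)] * X *
        (Matrix.diagonal ![(l₂ g : K), (m₂ g : K)])⁻¹ = X := by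
      ext i j
      rw [conj_diag_apply]
      fin_cases i <;> fin_cases j <;>
        simp only [Fin.zero_eta, Fin.mk_one, Matrix.cons_val_zero, Matrix.cons_val_one, Matrix.head_cons,
          Units.val_inv_eq_inv_val, ← hc1 g] <;> field_simp <;> ring
    have h2 := hcomm g X hXtr
    simp only at h2
    rw [hfix, hXE] at h2
    have h3 := congrFun (congrFun h2 0) 1
    rw [conj_diag_apply] at h3
    simp only [Matrix.cons_val_zero, Matrix.cons_val_one, Matrix.head_cons,
      Units.val_inv_eq_inv_val, hEdef] at h3
    norm_num [Matrix.of_apply] at h3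
    have hl1m1 : (l₁ g : K) = m₁ g := by
      first
      | exact h3
      | exact h3.symm
      | (field_simp at h3
         first | exact h3 | exact h3.symm | linear_combination h3 | linear_combination -h3)
    rw [hl1m1, hc1 g]
  -- conclude
  rcases key with hA | hB
  · refine ⟨l₁ * l₂⁻¹, 1, by simp, ?_⟩
    intro g
    rw [Matrix.inv_eq_right_inv (one_mul (1 : Matrix (Fin 2) (Fin 2) K)), one_mul, mul_one,
      ← Matrix.diagonal_smul]
    apply congrArg
    funext i
    have n2 : (l₂ g : K) ≠ 0 := Units.ne_zero _
    fin_cases i <;>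
      simp [Units.val_inv_eq_inv_val] <;>
      field_simp <;>
      first | linear_combination hA g | linear_combination -hA g
  · set P : Matrix (Fin 2) (Fin 2) K := Matrix.of ![![0, 1], ![1, 0]] with hPdef
    have hPP : P * P = 1 := by
      ext i j
      fin_cases i <;> fin_cases j <;>
        simp [hPdef, Matrix.mul_apply, Fin.sum_univ_two, Matrix.one_apply]
    have hPinv : P⁻¹ = P := Matrix.inv_eq_right_inv hPP
    have hPdet : IsUnit P.det := by
      rw [Matrix.det_fin_two]
      simp [hPdef]
    refine ⟨l₁ * m₂⁻¹, P, hPdet, ?_⟩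
    intro g
    rw [hPinv]
    have hswap : P * Matrix.diagonal ![(l₁ g : K), (m₁ g : K)] * P
        = Matrix.diagonal ![(m₁ g : K), (l₁ g : K)] := by
      ext i j
      fin_cases i <;> fin_cases j <;>
        simp [hPdef, Matrix.mul_apply, Matrix.vecMul, dotProduct, Fin.sum_univ_two, Matrix.diagonal_apply]
    rw [hswap, ← Matrix.diagonal_smul]
    apply congrArg
    funext i
    have n2 : (m₂ g : K) ≠ 0 := Units.ne_zero _
    fin_cases i <;>
      simp [Units.val_inv_eq_inv_val] <;>
      field_simp <;>
      first | linear_combination hB g | linear_combination -hB g
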